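/- Let n, m be positive integers, A an n×n real matrix, B an n×m real matrix, Q an n×n positive definite real matrix and R an m×m positive definite real matrix. Suppose P : [0,1] → (n×n real matrices) is such that for every γ ∈ [0,1], P(γ) is positive semidefinite, satisfies the discounted discrete-time algebraic Riccati equation P(γ) = γ·Aᵀ P(γ) A − γ²·Aᵀ P(γ) B (R + γ·Bᵀ P(γ) B)⁻¹ Bᵀ P(γ) A + Q, and is the unique positive semidefinite solution of this equation. Then the map γ ↦ P(γ) is continuous on [0,1]. -/

import Mathlib

open Matrix Filter Topology

set_option maxHeartbeats 1000000

/-- The discounted discrete-time algebraic Riccati equation operator: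
`γ • AᵀPA − γ² • AᵀPB(R + γ BᵀPB)⁻¹BᵀPA + Q`. -/
noncomputable def dare {n m : ℕ} (A Q : Matrix (Fin n) (Fin n) ℝ)
    (B : Matrix (Fin n) (Fin m) ℝ) (R : Matrix (Fin m) (Fin m) ℝ)
    (γ : ℝ) (P : Matrix (Fin n) (Fin n) ℝ) : Matrix (Fin n) (Fin n) ℝ :=
  γ • (Aᵀ * P * A) -
    (γ ^ 2) • (Aᵀ * P * B * (R + γ • (Bᵀ * P * B))⁻¹ * (Bᵀ * P * A)) + Q


noncomputable section
namespace DareProof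

variable {n m : ℕ} (A Q : Matrix (Fin n) (Fin n) ℝ) (B : Matrix (Fin n) (Fin m) ℝ)
  (R : Matrix (Fin m) (Fin m) ℝ)

def W (γ : ℝ) (M : Matrix (Fin n) (Fin n) ℝ) : Matrix (Fin m) (Fin m) ℝ :=
  R + γ • (Bᵀ * M * B)

def Kopt (γ : ℝ) (M : Matrix (Fin n) (Fin n) ℝ) : Matrix (Fin m) (Fin n) ℝ :=
  -(γ • ((W B R γ M)⁻¹ * (Bᵀ * M * A)))

def g (γ : ℝ) (M : Matrix (Fin n) (Fin n) ℝ) (K : Matrix (Fin m) (Fin n) ℝ) :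
    Matrix (Fin n) (Fin n) ℝ :=
  Q + γ • ((A + B * K)ᵀ * M * (A + B * K)) + Kᵀ * R * K

variable {A Q B R}

section key
variable {γ : ℝ} {M : Matrix (Fin n) (Fin n) ℝ}

lemma W_transpose (hMs : Mᵀ = M) (hRs : Rᵀ = R) : (W B R γ M)ᵀ = W B R γ M := by
  simp [W, transpose_add, transpose_smul, transpose_mul, Matrix.mul_assoc, hMs, hRs]

lemma W_mul_Kopt (hdet : IsUnit (W B R γ M).det) :
    W B R γ M * Kopt A B R γ M = -(γ • (Bᵀ * M * A)) := by
  rw [Kopt, Matrix.mul_neg, Matrix.mul_smul, ← Matrix.mul_assoc,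
    Matrix.mul_nonsing_inv _ hdet, Matrix.one_mul]

lemma Kopt_transpose_mul_W (hMs : Mᵀ = M) (hRs : Rᵀ = R) (hdet : IsUnit (W B R γ M).det) :
    (Kopt A B R γ M)ᵀ * W B R γ M = -(γ • (Aᵀ * M * B)) := by
  have := congrArg transpose (W_mul_Kopt (A := A) (γ := γ) (M := M) hdet)
  rwa [transpose_mul, W_transpose hMs hRs, transpose_neg, transpose_smul, transpose_mul,
    transpose_mul, transpose_transpose, hMs, ← Matrix.mul_assoc] at this

/-- The fundamental completion-of-squares identity. -/
lemma key (hMs : Mᵀ = M) (hRs : Rᵀ = R) (hdet : IsUnit (W B R γ M).det)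
    (K : Matrix (Fin m) (Fin n) ℝ) :
    g A Q B R γ M K =
      dare A Q B R γ M +
        (K - Kopt A B R γ M)ᵀ * W B R γ M * (K - Kopt A B R γ M) := by
  have h1 : W B R γ M * Kopt A B R γ M = -(γ • (Bᵀ * M * A)) := W_mul_Kopt hdet
  have h2 : (Kopt A B R γ M)ᵀ * W B R γ M = -(γ • (Aᵀ * M * B)) :=
    Kopt_transpose_mul_W hMs hRs hdet
  set K₀ := Kopt A B R γ M with hK₀
  have h3 : K₀ᵀ * (W B R γ M * K₀)
      = (γ ^ 2) • (Aᵀ * M * B * (W B R γ M)⁻¹ * (Bᵀ * M * A)) := by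
    rw [h1, hK₀, Kopt, transpose_neg, transpose_smul, Matrix.neg_mul, Matrix.mul_neg, neg_neg,
      Matrix.smul_mul, Matrix.mul_smul, smul_smul, ← pow_two]
    congr 1
    rw [transpose_mul, Matrix.transpose_nonsing_inv, W_transpose hMs hRs]
    simp only [transpose_mul, transpose_transpose, hMs, Matrix.mul_assoc]
  have expand : (K - K₀)ᵀ * W B R γ M * (K - K₀)
      = Kᵀ * (W B R γ M * K) - Kᵀ * (W B R γ M * K₀) - (K₀ᵀ * W B R γ M) * K
        + K₀ᵀ * (W B R γ M * K₀) := by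
    rw [transpose_sub]
    simp only [Matrix.sub_mul, Matrix.mul_sub, Matrix.mul_assoc]
    abel
  rw [expand, h3, h1, h2, dare, g, W]
  simp only [transpose_add, transpose_mul, Matrix.mul_add, Matrix.add_mul, Matrix.mul_neg,
    Matrix.neg_mul, Matrix.mul_smul, Matrix.smul_mul, smul_add, smul_sub, Matrix.mul_assoc, hMs]
  abel

end key

section order
variable {γ γ₁ γ₂ : ℝ} {M M₁ M₂ : Matrix (Fin n) (Fin n) ℝ}

lemma psd_iff (M : Matrix (Fin n) (Fin n) ℝ) :
    M.PosSemidef ↔ Mᵀ = M ∧ ∀ x, 0 ≤ x ⬝ᵥ M *ᵥ x := by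
  rw [posSemidef_iff_dotProduct_mulVec]
  unfold Matrix.IsHermitian
  simp [conjTranspose_eq_transpose_of_trivial]

lemma psd_symm (hM : M.PosSemidef) : Mᵀ = M := ((psd_iff M).1 hM).1

lemma psd_smul {M : Matrix (Fin n) (Fin n) ℝ} (hM : M.PosSemidef) {c : ℝ} (hc : 0 ≤ c) :
    (c • M).PosSemidef := by
  rw [psd_iff] at hM ⊢
  refine ⟨by rw [transpose_smul, hM.1], fun x => ?_⟩
  rw [smul_mulVec, dotProduct_smul, smul_eq_mul]
  exact mul_nonneg hc (hM.2 x)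

lemma psd_congr {k l : ℕ} {M : Matrix (Fin k) (Fin k) ℝ} (hM : M.PosSemidef)
    (C : Matrix (Fin k) (Fin l) ℝ) : (Cᵀ * M * C).PosSemidef := by
  have := hM.conjTranspose_mul_mul_same C
  rwa [conjTranspose_eq_transpose_of_trivial] at this

lemma W_posDef (hR : R.PosDef) (hM : M.PosSemidef) (hγ : 0 ≤ γ) : (W B R γ M).PosDef :=
  hR.add_posSemidef (psd_smul (psd_congr hM B) hγ)

lemma W_isUnit_det (hR : R.PosDef) (hM : M.PosSemidef) (hγ : 0 ≤ γ) :
    IsUnit (W B R γ M).det :=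
  (W_posDef hR hM hγ).det_pos.ne'.isUnit

lemma Rs (hR : R.PosDef) : Rᵀ = R := by
  have := hR.isHermitian
  rwa [IsHermitian, conjTranspose_eq_transpose_of_trivial] at this

lemma dare_eq_g (hR : R.PosDef) (hM : M.PosSemidef) (hγ : 0 ≤ γ) :
    dare A Q B R γ M = g A Q B R γ M (Kopt A B R γ M) := by
  rw [key (A := A) (Q := Q) (psd_symm hM) (Rs hR) (W_isUnit_det hR hM hγ)]
  simp

lemma g_sub_dare_psd (hR : R.PosDef) (hM : M.PosSemidef) (hγ : 0 ≤ γ)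
    (K : Matrix (Fin m) (Fin n) ℝ) :
    (g A Q B R γ M K - dare A Q B R γ M).PosSemidef := by
  rw [key (A := A) (Q := Q) (psd_symm hM) (Rs hR) (W_isUnit_det hR hM hγ) K, add_sub_cancel_left]
  exact psd_congr (W_posDef hR hM hγ).posSemidef _

lemma g_sub_g_M (K : Matrix (Fin m) (Fin n) ℝ) :
    g A Q B R γ M₂ K - g A Q B R γ M₁ K
      = γ • ((A + B * K)ᵀ * (M₂ - M₁) * (A + B * K)) := by
  simp only [g, Matrix.mul_sub, Matrix.sub_mul, smul_sub]
  abel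

lemma g_sub_g_γ (K : Matrix (Fin m) (Fin n) ℝ) :
    g A Q B R γ₂ M K - g A Q B R γ₁ M K
      = (γ₂ - γ₁) • ((A + B * K)ᵀ * M * (A + B * K)) := by
  simp only [g, sub_smul]
  abel

lemma dare_mono_M (hR : R.PosDef) (hM₁ : M₁.PosSemidef) (h12 : (M₂ - M₁).PosSemidef)
    (hγ : 0 ≤ γ) : (dare A Q B R γ M₂ - dare A Q B R γ M₁).PosSemidef := by
  have hM₂ : M₂.PosSemidef := by simpa using hM₁.add h12
  set K₂ := Kopt A B R γ M₂
  have h1 : (g A Q B R γ M₂ K₂ - g A Q B R γ M₁ K₂).PosSemidef := by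
    rw [g_sub_g_M]
    exact psd_smul (psd_congr h12 _) hγ
  have h2 := g_sub_dare_psd (A := A) (Q := Q) (B := B) hR hM₁ hγ K₂
  have := h1.add h2
  rwa [sub_add_sub_cancel, ← dare_eq_g hR hM₂ hγ] at this

lemma dare_mono_γ (hR : R.PosDef) (hM : M.PosSemidef) (hγ₁ : 0 ≤ γ₁) (h12 : γ₁ ≤ γ₂) :
    (dare A Q B R γ₂ M - dare A Q B R γ₁ M).PosSemidef := by
  set K₂ := Kopt A B R γ₂ M
  have h1 : (g A Q B R γ₂ M K₂ - g A Q B R γ₁ M K₂).PosSemidef := by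
    rw [g_sub_g_γ]
    exact psd_smul (psd_congr hM _) (by linarith)
  have h2 := g_sub_dare_psd (A := A) (Q := Q) (B := B) hR hM hγ₁ K₂
  have := h1.add h2
  rwa [sub_add_sub_cancel, ← dare_eq_g hR hM (le_trans hγ₁ h12)] at this

lemma dare_psd (hQ : Q.PosDef) (hR : R.PosDef) (hM : M.PosSemidef) (hγ : 0 ≤ γ) :
    (dare A Q B R γ M).PosSemidef := by
  rw [dare_eq_g hR hM hγ, g]
  exact (hQ.posSemidef.add (psd_smul (psd_congr hM _) hγ)).add (psd_congr hR.posSemidef _)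

end order
section iter
variable (A Q B R)

def pseq (γ : ℝ) : ℕ → Matrix (Fin n) (Fin n) ℝ
  | 0 => 0
  | k+1 => dare A Q B R γ (pseq γ k)

variable {A Q B R}
variable {γ γ₁ γ₂ : ℝ}

lemma pseq_psd (hQ : Q.PosDef) (hR : R.PosDef) (hγ : 0 ≤ γ) :
    ∀ k, (pseq A Q B R γ k).PosSemidef
  | 0 => PosSemidef.zero
  | k+1 => dare_psd hQ hR (pseq_psd hQ hR hγ k) hγ

lemma pseq_le_fix (hQ : Q.PosDef) (hR : R.PosDef) (hγ : 0 ≤ γ)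
    {X : Matrix (Fin n) (Fin n) ℝ} (hX : X.PosSemidef) (hfix : X = dare A Q B R γ X) :
    ∀ k, (X - pseq A Q B R γ k).PosSemidef
  | 0 => by simpa [pseq] using hX
  | k+1 => by
      have := dare_mono_M (A := A) (Q := Q) (B := B) hR (pseq_psd hQ hR hγ k)
        (pseq_le_fix hQ hR hγ hX hfix k) hγ
      rw [← hfix] at this
      simpa only [pseq] using this

lemma pseq_mono_k (hQ : Q.PosDef) (hR : R.PosDef) (hγ : 0 ≤ γ) :
    ∀ k, (pseq A Q B R γ (k+1) - pseq A Q B R γ k).PosSemidef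
  | 0 => by simpa [pseq] using pseq_psd (A := A) (B := B) hQ hR hγ 1
  | k+1 => dare_mono_M (A := A) (Q := Q) (B := B) hR (pseq_psd hQ hR hγ k)
      (pseq_mono_k hQ hR hγ k) hγ

lemma pseq_mono_γ (hQ : Q.PosDef) (hR : R.PosDef) (hγ₁ : 0 ≤ γ₁) (h12 : γ₁ ≤ γ₂) :
    ∀ k, (pseq A Q B R γ₂ k - pseq A Q B R γ₁ k).PosSemidef
  | 0 => by
      simpa [pseq] using (Matrix.PosSemidef.zero : (0 : Matrix (Fin n) (Fin n) ℝ).PosSemidef)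
  | k+1 => by
      have hγ₂ := le_trans hγ₁ h12
      have h1 := dare_mono_M (A := A) (Q := Q) (B := B) hR (pseq_psd hQ hR hγ₁ k)
        (pseq_mono_γ hQ hR hγ₁ h12 k) hγ₂
      have h2 := dare_mono_γ (A := A) (Q := Q) (B := B) hR
        (pseq_psd (A := A) (B := B) hQ hR hγ₁ k) hγ₁ h12
      have := h1.add h2
      rw [sub_add_sub_cancel] at this
      simpa only [pseq] using this

end iter

section limit

/-- polarization identity for symmetric matrices -/
lemma polar {N : Matrix (Fin n) (Fin n) ℝ} (hNs : Nᵀ = N) (i j : Fin n) :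
    N i j = ((Pi.single i 1 + Pi.single j 1) ⬝ᵥ N *ᵥ (Pi.single i 1 + Pi.single j 1)
      - Pi.single i 1 ⬝ᵥ N *ᵥ (Pi.single i 1 : Fin n → ℝ)
      - Pi.single j 1 ⬝ᵥ N *ᵥ (Pi.single j 1 : Fin n → ℝ)) / 2 := by
  have hji : N j i = N i j := by
    conv_lhs => rw [← hNs]
    rw [transpose_apply]
  simp only [mulVec_add, dotProduct_add, add_dotProduct, mulVec_single, single_dotProduct]
  simp [hji]
  ring

lemma psd_quad_nonneg {M : Matrix (Fin n) (Fin n) ℝ} (hM : M.PosSemidef) (x : Fin n → ℝ) :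
    0 ≤ x ⬝ᵥ M *ᵥ x := ((psd_iff M).1 hM).2 x

lemma psd_of_tendsto {Mk : ℕ → Matrix (Fin n) (Fin n) ℝ} {L : Matrix (Fin n) (Fin n) ℝ}
    (h : Tendsto Mk atTop (𝓝 L)) (hpsd : ∀ᶠ k in atTop, (Mk k).PosSemidef) :
    L.PosSemidef := by
  rw [psd_iff]
  constructor
  · have ht : Tendsto (fun k => (Mk k)ᵀ) atTop (𝓝 Lᵀ) :=
      ((continuous_id.matrix_transpose).tendsto L).comp h
    exact tendsto_nhds_unique (ht.congr' (hpsd.mono fun k hk => psd_symm hk)) h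
  · intro x
    have hq : Tendsto (fun k => x ⬝ᵥ (Mk k) *ᵥ x) atTop (𝓝 (x ⬝ᵥ L *ᵥ x)) :=
      ((continuous_const.dotProduct
        ((continuous_id.matrix_mulVec continuous_const))).tendsto L).comp h
    exact ge_of_tendsto hq (hpsd.mono fun k hk => psd_quad_nonneg hk x)

end limit
section cont

lemma camul {X : Type*} [TopologicalSpace X] {a b c : ℕ}
    {f : X → Matrix (Fin a) (Fin b) ℝ} {g : X → Matrix (Fin b) (Fin c) ℝ} {x : X}
    (hf : ContinuousAt f x) (hg : ContinuousAt g x) :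
    ContinuousAt (fun y => f y * g y) x :=
  ((continuous_fst.matrix_mul continuous_snd).continuousAt).comp
    (g := fun p : Matrix (Fin a) (Fin b) ℝ × Matrix (Fin b) (Fin c) ℝ => p.1 * p.2)
    (f := fun y => (f y, g y)) (hf.prodMk hg)

variable {γ₀ : ℝ} {L : Matrix (Fin n) (Fin n) ℝ}

lemma dare_continuousAt (hdet : IsUnit (W B R γ₀ L).det) :
    ContinuousAt (fun p : ℝ × Matrix (Fin n) (Fin n) ℝ => dare A Q B R p.1 p.2) (γ₀, L) := by
  have hWc : ContinuousAt (fun p : ℝ × Matrix (Fin n) (Fin n) ℝ =>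
      R + p.1 • (Bᵀ * p.2 * B)) (γ₀, L) :=
    continuousAt_const.add (continuousAt_fst.smul
      (camul (camul continuousAt_const continuousAt_snd) continuousAt_const))
  have hinv : ContinuousAt Inv.inv (R + γ₀ • (Bᵀ * L * B)) := by
    apply continuousAt_matrix_inv
    rw [Ring.inverse_eq_inv']
    apply continuousAt_inv₀
    have : IsUnit (R + γ₀ • (Bᵀ * L * B)).det := hdet
    exact this.ne_zero
  have hWinv : ContinuousAt
      (fun p : ℝ × Matrix (Fin n) (Fin n) ℝ => (R + p.1 • (Bᵀ * p.2 * B))⁻¹) (γ₀, L) :=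
    ContinuousAt.comp (g := Inv.inv)
      (f := fun p : ℝ × Matrix (Fin n) (Fin n) ℝ => R + p.1 • (Bᵀ * p.2 * B)) hinv hWc
  unfold dare
  refine ContinuousAt.add (ContinuousAt.sub ?_ ?_) continuousAt_const
  · exact continuousAt_fst.smul
      (camul (camul continuousAt_const continuousAt_snd) continuousAt_const)
  · exact (continuousAt_fst.pow 2).smul
      (camul (camul (camul (camul continuousAt_const continuousAt_snd) continuousAt_const)
        hWinv) (camul (camul continuousAt_const continuousAt_snd) continuousAt_const))

end cont
section existlim
variable {γ : ℝ}

lemma exists_limit (hQ : Q.PosDef) (hR : R.PosDef) (hγ0 : 0 ≤ γ) (hγ1 : γ ≤ 1)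
    {X₁ : Matrix (Fin n) (Fin n) ℝ} (hX₁ : X₁.PosSemidef) (hfix₁ : X₁ = dare A Q B R 1 X₁) :
    ∃ L : Matrix (Fin n) (Fin n) ℝ, L.PosSemidef ∧ (X₁ - L).PosSemidef ∧
      L = dare A Q B R γ L := by
  have hbd : ∀ k, (X₁ - pseq A Q B R γ k).PosSemidef := by
    intro k
    have h1 := pseq_le_fix hQ hR zero_le_one hX₁ hfix₁ k
    have h2 := pseq_mono_γ (A := A) (B := B) hQ hR hγ0 hγ1 k
    have := h1.add h2
    rwa [sub_add_sub_cancel] at this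
  set p : ℕ → Matrix (Fin n) (Fin n) ℝ := pseq A Q B R γ with hp
  have hpsd : ∀ k, (p k).PosSemidef := pseq_psd hQ hR hγ0
  have hmonk : ∀ k, (p (k+1) - p k).PosSemidef := pseq_mono_k hQ hR hγ0
  have qmono : ∀ x : Fin n → ℝ, Monotone (fun k => x ⬝ᵥ (p k) *ᵥ x) := by
    intro x
    apply monotone_nat_of_le_succ
    intro k
    have := psd_quad_nonneg (hmonk k) x
    rw [sub_mulVec, dotProduct_sub] at this
    linarith
  have qbdd : ∀ x : Fin n → ℝ, BddAbove (Set.range fun k => x ⬝ᵥ (p k) *ᵥ x) := by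
    intro x
    refine ⟨x ⬝ᵥ X₁ *ᵥ x, ?_⟩
    rintro _ ⟨k, rfl⟩
    have := psd_quad_nonneg (hbd k) x
    rw [sub_mulVec, dotProduct_sub] at this
    dsimp only
    linarith
  set s : (Fin n → ℝ) → ℝ := fun x => ⨆ k, x ⬝ᵥ (p k) *ᵥ x with hs
  have hst : ∀ x, Tendsto (fun k => x ⬝ᵥ (p k) *ᵥ x) atTop (𝓝 (s x)) := fun x =>
    tendsto_atTop_ciSup (qmono x) (qbdd x)
  set L : Matrix (Fin n) (Fin n) ℝ := Matrix.of (fun i j =>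
    (s (Pi.single i 1 + Pi.single j 1) - s (Pi.single i 1) - s (Pi.single j 1)) / 2) with hL
  have hent : ∀ i j, Tendsto (fun k => p k i j) atTop (𝓝 (L i j)) := by
    intro i j
    have h := (((hst (Pi.single i 1 + Pi.single j 1)).sub (hst (Pi.single i 1))).sub
      (hst (Pi.single j 1))).div_const 2
    apply h.congr
    intro k
    exact (polar (psd_symm (hpsd k)) i j).symm
  have hLt : Tendsto p atTop (𝓝 L) := by
    refine tendsto_pi_nhds.2 ?_
    intro i
    refine tendsto_pi_nhds.2 ?_
    intro j
    exact hent i j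
  have hLpsd : L.PosSemidef := psd_of_tendsto hLt (Filter.Eventually.of_forall hpsd)
  have hXL : (X₁ - L).PosSemidef :=
    psd_of_tendsto (tendsto_const_nhds.sub hLt) (Filter.Eventually.of_forall hbd)
  refine ⟨L, hLpsd, hXL, ?_⟩
  have h1 : Tendsto (fun k => p (k+1)) atTop (𝓝 L) := hLt.comp (tendsto_add_atTop_nat 1)
  have h2 : Tendsto (fun k => dare A Q B R γ (p k)) atTop (𝓝 (dare A Q B R γ L)) := by
    have hc := dare_continuousAt (A := A) (Q := Q) (B := B) (W_isUnit_det (B := B) hR hLpsd hγ0)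
    exact hc.tendsto.comp
      ((tendsto_const_nhds : Tendsto (fun _ : ℕ => γ) atTop (𝓝 γ)).prodMk_nhds hLt)
  refine tendsto_nhds_unique h1 ?_
  apply h2.congr
  intro k
  rfl

lemma entry_bound {M C : Matrix (Fin n) (Fin n) ℝ} (hM : M.PosSemidef) (hC : C.PosSemidef)
    (hMC : (C - M).PosSemidef) (i j : Fin n) : |M i j| ≤ C.trace := by
  have hdiag : ∀ N : Matrix (Fin n) (Fin n) ℝ, N.PosSemidef → ∀ i, 0 ≤ N i i := by
    intro N hN i
    have := psd_quad_nonneg hN (Pi.single i 1)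
    simpa using this
  have hMii : ∀ i, M i i ≤ C i i := by
    intro i
    have := hdiag _ hMC i
    simp only [Matrix.sub_apply] at this
    linarith
  have hCtr : ∀ i, C i i ≤ C.trace := by
    intro i
    calc C i i = C.diag i := rfl
    _ ≤ ∑ k, C.diag k := Finset.single_le_sum (fun k _ => hdiag _ hC k) (Finset.mem_univ i)
    _ = C.trace := rfl
  have hsym : M j i = M i j := by
    conv_lhs => rw [← psd_symm hM]
    rw [transpose_apply]
  have e1 : (Pi.single i 1 + Pi.single j 1) ⬝ᵥ M *ᵥ (Pi.single i 1 + Pi.single j 1)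
      = M i i + M j j + 2 * M i j := by
    simp only [mulVec_add, dotProduct_add, add_dotProduct, mulVec_single, single_dotProduct,
      mul_one, one_mul, MulOpposite.op_one, one_smul, col_apply]
    rw [hsym]; ring
  have e2 : (Pi.single i 1 - Pi.single j 1) ⬝ᵥ M *ᵥ (Pi.single i 1 - Pi.single j 1)
      = M i i + M j j - 2 * M i j := by
    simp only [mulVec_sub, dotProduct_sub, sub_dotProduct, mulVec_single, single_dotProduct,
      mul_one, one_mul, MulOpposite.op_one, one_smul, col_apply]
    rw [hsym]; ring
  have h1 := psd_quad_nonneg hM (Pi.single i 1 + Pi.single j 1)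
  have h2 := psd_quad_nonneg hM (Pi.single i 1 - Pi.single j 1)
  rw [e1] at h1
  rw [e2] at h2
  have habs : |M i j| ≤ (M i i + M j j) / 2 := by
    rw [abs_le]
    constructor <;> linarith
  have t1 := hMii i
  have t2 := hMii j
  have t3 := hCtr i
  have t4 := hCtr j
  linarith

end existlim
end DareProof

instance matrixFirstCountable {a b : ℕ} :
    FirstCountableTopology (Matrix (Fin a) (Fin b) ℝ) :=
  inferInstanceAs (FirstCountableTopology (Fin a → Fin b → ℝ))

open DareProof in
/-- If, for every discount factor `γ ∈ [0,1]`, `P γ` is the unique positive semidefinite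
solution of the discounted discrete-time algebraic Riccati equation, then `γ ↦ P γ`
is continuous on `[0,1]`. -/
theorem continuity_of_dare_solution (n m : ℕ) (hn : 0 < n) (hm : 0 < m)
    (A Q : Matrix (Fin n) (Fin n) ℝ) (B : Matrix (Fin n) (Fin m) ℝ)
    (R : Matrix (Fin m) (Fin m) ℝ) (hQ : Q.PosDef) (hR : R.PosDef)
    (P : ℝ → Matrix (Fin n) (Fin n) ℝ)
    (hPsd : ∀ γ ∈ Set.Icc (0 : ℝ) 1, (P γ).PosSemidef)
    (hPeq : ∀ γ ∈ Set.Icc (0 : ℝ) 1, P γ = dare A Q B R γ (P γ))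
    (hPuniq : ∀ γ ∈ Set.Icc (0 : ℝ) 1, ∀ P' : Matrix (Fin n) (Fin n) ℝ,
      P'.PosSemidef → P' = dare A Q B R γ P' → P' = P γ) :
    ContinuousOn P (Set.Icc (0 : ℝ) 1) := by
  have h1mem : (1 : ℝ) ∈ Set.Icc (0 : ℝ) 1 := ⟨zero_le_one, le_refl 1⟩
  have hP1psd := hPsd 1 h1mem
  have hP1fix := hPeq 1 h1mem
  have hbound : ∀ γ ∈ Set.Icc (0 : ℝ) 1, (P 1 - P γ).PosSemidef := by
    intro γ hγ
    obtain ⟨L, hL1, hL2, hL3⟩ :=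
      exists_limit (A := A) (Q := Q) (B := B) (R := R) hQ hR hγ.1 hγ.2 hP1psd hP1fix
    have := hPuniq γ hγ L hL1 hL3
    rwa [← this]
  set c := (P 1).trace with hc
  set box : Set (Matrix (Fin n) (Fin n) ℝ) :=
    Set.univ.pi (fun _ => Set.univ.pi fun _ => Set.Icc (-c) c) with hbox
  have hboxcompact : IsCompact box :=
    isCompact_univ_pi fun _ => isCompact_univ_pi fun _ => isCompact_Icc
  have hmembox : ∀ γ ∈ Set.Icc (0 : ℝ) 1, P γ ∈ box := by
    intro γ hγ
    rw [hbox]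
    refine Set.mem_univ_pi.2 ?_
    intro i
    rw [Set.mem_univ_pi]
    intro j
    rw [Set.mem_Icc, ← abs_le]
    exact entry_bound (hPsd γ hγ) hP1psd (hbound γ hγ) i j
  intro γ₀ hγ₀
  show Filter.Tendsto P (nhdsWithin γ₀ (Set.Icc 0 1)) (nhds (P γ₀))
  apply Filter.tendsto_of_subseq_tendsto
  intro ns hns
  have hns0 : Filter.Tendsto ns Filter.atTop (nhds γ₀) := hns.mono_right nhdsWithin_le_nhds
  have hnsI : ∀ᶠ k in Filter.atTop, ns k ∈ Set.Icc (0 : ℝ) 1 :=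
    hns.eventually eventually_mem_nhdsWithin
  have hfreq : ∃ᶠ k in Filter.atTop, P (ns k) ∈ box :=
    (hnsI.mono fun k hk => hmembox _ hk).frequently
  obtain ⟨M, hMbox, φ, hφmono, hφtend⟩ := hboxcompact.tendsto_subseq' hfreq
  have hγφ : Filter.Tendsto (fun k => ns (φ k)) Filter.atTop (nhds γ₀) :=
    hns0.comp hφmono.tendsto_atTop
  have hIφ : ∀ᶠ k in Filter.atTop, ns (φ k) ∈ Set.Icc (0 : ℝ) 1 :=
    hφmono.tendsto_atTop.eventually hnsI
  have hMpsd : M.PosSemidef :=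
    psd_of_tendsto hφtend (hIφ.mono fun k hk => hPsd _ hk)
  have hMfix : M = dare A Q B R γ₀ M := by
    have hcA := dare_continuousAt (A := A) (Q := Q) (B := B)
      (W_isUnit_det (B := B) hR hMpsd hγ₀.1)
    have hpair : Filter.Tendsto (fun k => ((ns (φ k), P (ns (φ k))) :
        ℝ × Matrix (Fin n) (Fin n) ℝ)) Filter.atTop (nhds (γ₀, M)) :=
      hγφ.prodMk_nhds hφtend
    have h2 : Filter.Tendsto (fun k => dare A Q B R (ns (φ k)) (P (ns (φ k))))
        Filter.atTop (nhds (dare A Q B R γ₀ M)) := hcA.tendsto.comp hpair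
    refine tendsto_nhds_unique ?_ h2
    apply hφtend.congr'
    exact hIφ.mono fun k hk => hPeq _ hk
  have hM : M = P γ₀ := hPuniq γ₀ hγ₀ M hMpsd hMfix
  exact ⟨φ, hM ▸ hφtend⟩
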